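/- Let L be a finite distributive lattice with a diamond coloring c by a set I. Let P be the set of join-irreducible elements of L with the induced order, and color each x ∈ P by κ(x) := c(x', x), where x' is the unique element of L covered by x. Then the map φ(z) := {p ∈ P : p ≤ z} is an order isomorphism from L onto the lattice of lower sets of P, and it preserves edge colors: for every covering pair x ⋖ y in L, if φ(y) \ φ(x) = {v} then c(x,y) = κ(v). -/

import Mathlib

/-- An element of a lattice with a least element is join irreducible if it is not the
minimum and cannot be written as a join of two other elements. -/
def JoinIrred {L : Type*} [Lattice L] [OrderBot L] (x : L) : Prop :=
  x ≠ ⊥ ∧ ∀ y z : L, x = y ⊔ z → x = y ∨ x = z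

/-- A diamond coloring of (the cover edges of) a lattice. -/
def IsDiamondColoring {L I : Type*} [Lattice L] (c : L → L → I) : Prop :=
  ∀ v s t u : L, v ⋖ s → v ⋖ t → s ⋖ u → t ⋖ u → s ≠ t →
    c v s = c t u ∧ c v t = c s u

/-- The lower set of join irreducibles below a given element `z`. -/
def joinIrredLowerSet {L : Type*} [Lattice L] [OrderBot L] (z : L) :
    LowerSet {x : L // JoinIrred x} :=
  ⟨{p | p.val ≤ z}, fun _ _ hba ha => le_trans (Subtype.coe_le_coe.mpr hba) ha⟩

theorem joinIrred_iff_supIrred {L : Type*} [Lattice L] [OrderBot L] {x : L} :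
    JoinIrred x ↔ SupIrred x := by
  constructor
  · rintro ⟨h1, h2⟩
    refine ⟨fun h => h1 (by simpa using h), fun b d hbd => (h2 b d hbd.symm).imp Eq.symm Eq.symm⟩
  · rintro ⟨h1, h2⟩
    refine ⟨fun h => h1 (by simp [h]), fun b d hbd => (h2 hbd.symm).imp Eq.symm Eq.symm⟩

theorem le_of_supIrred_le {L : Type*} [DistribLattice L] [OrderBot L] [Fintype L] {a b : L}
    (h : ∀ p : L, SupIrred p → p ≤ a → p ≤ b) : a ≤ b := by
  obtain ⟨s, rfl, hs⟩ := exists_supIrred_decomposition a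
  exact Finset.sup_le fun i hi => h i (hs hi) (Finset.le_sup (f := id) hi)

theorem color_of_chain {L I : Type*} [DistribLattice L] [OrderBot L] [Fintype L]
    (c : L → L → I) (hc : IsDiamondColoring c) (v' v : L) (hv : v' ⋖ v) :
    ∀ x : L, v' ≤ x → ¬ v ≤ x → x ⋖ x ⊔ v ∧ c x (x ⊔ v) = c v' v := by
  intro x
  induction x using WellFoundedLT.induction with
  | ind x ih =>
  intro hv'x hvx
  have hxv : x ⊓ v = v' := by
    have h1 : v' ≤ x ⊓ v := le_inf hv'x hv.le
    have h2 : x ⊓ v < v := lt_of_le_of_ne inf_le_right fun h => hvx (inf_eq_right.mp h)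
    rcases h1.eq_or_lt with h | h
    · exact h.symm
    · exact absurd h2 (hv.2 h)
  have hxcov : x ⋖ x ⊔ v := covBy_sup_of_inf_covBy_right (hxv ▸ hv)
  rcases eq_or_lt_of_le hv'x with rfl | hlt
  · rw [sup_eq_right.mpr hv.le]
    exact ⟨hv, rfl⟩
  · obtain ⟨z, hz, hzx⟩ : ∃ z, v' ≤ z ∧ z ⋖ x := by
      obtain ⟨z, ⟨hz1, hz2⟩, hmax⟩ := Set.Finite.exists_maximalFor id {z | v' ≤ z ∧ z < x}
        (Set.toFinite _) ⟨v', le_rfl, hlt⟩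
      exact ⟨z, hz1, hz2, fun w hzw hwx =>
        lt_irrefl _ (hzw.trans_le (hmax (j := w) ⟨hz1.trans hzw.le, hwx⟩ hzw.le))⟩
    have hvz : ¬ v ≤ z := fun h => hvx (h.trans hzx.le)
    obtain ⟨hzc, hzcol⟩ := ih z hzx.lt hz hvz
    have hzv_inf : (z ⊔ v) ⊓ x = z := by
      rw [inf_comm, inf_sup_left, inf_eq_right.mpr hzx.le, hxv, sup_eq_left.mpr hz]
    have h2 : z ⊔ v ⋖ x ⊔ v := by
      have hzz : (z ⊔ v) ⊓ x ⋖ x := by rw [hzv_inf]; exact hzx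
      have h := covBy_sup_of_inf_covBy_right hzz
      rwa [sup_right_comm, sup_eq_right.mpr hzx.le] at h
    have hne : x ≠ z ⊔ v := fun h => hvx (h ▸ le_sup_right)
    have hd := hc z x (z ⊔ v) (x ⊔ v) hzx hzc hxcov h2 hne
    exact ⟨hxcov, hd.2.symm.trans hzcol⟩

theorem stmt_8 {L I : Type*} [DistribLattice L] [OrderBot L] [Fintype L]
    (c : L → L → I) (hc : IsDiamondColoring c) :
    Function.Bijective (joinIrredLowerSet (L := L)) ∧
    (∀ z w : L, z ≤ w ↔ joinIrredLowerSet z ≤ joinIrredLowerSet w) ∧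
    (∀ x y : L, x ⋖ y → ∀ v : {x : L // JoinIrred x},
      ((joinIrredLowerSet y : Set {x : L // JoinIrred x}) \
        (joinIrredLowerSet x : Set {x : L // JoinIrred x}) = {v}) →
      ∀ v' : L, v' ⋖ v.val → c x y = c v' v.val) := by
  classical
  have hmem : ∀ (z : L) (p : {x : L // JoinIrred x}),
      p ∈ joinIrredLowerSet z ↔ p.val ≤ z := fun _ _ => Iff.rfl
  have hord : ∀ z w : L, z ≤ w ↔ joinIrredLowerSet z ≤ joinIrredLowerSet w := by
    intro z w
    constructor
    · intro h p hp
      exact le_trans hp h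
    · intro h
      exact le_of_supIrred_le fun p hp hpz =>
        h (show (⟨p, joinIrred_iff_supIrred.mpr hp⟩ : {x : L // JoinIrred x}) ∈
          joinIrredLowerSet z from hpz)
  refine ⟨⟨fun z w h => le_antisymm ((hord z w).mpr h.le) ((hord w z).mpr h.ge), ?_⟩,
    hord, ?_⟩
  · -- surjectivity
    intro S
    refine ⟨((S : Set {x : L // JoinIrred x}).toFinset).sup (fun p => p.val), ?_⟩
    apply SetLike.coe_injective
    ext p
    simp only [joinIrredLowerSet, LowerSet.coe_mk, Set.mem_setOf_eq, SetLike.mem_coe]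
    constructor
    · intro hp
      have hprime : SupPrime p.val := (joinIrred_iff_supIrred.mp p.2).supPrime
      obtain ⟨q, hq, hpq⟩ := hprime.le_finset_sup.mp hp
      exact S.lower (Subtype.coe_le_coe.mp hpq) (Set.mem_toFinset.mp hq)
    · intro hp
      exact Finset.le_sup (f := fun p => p.val) (Set.mem_toFinset.mpr hp)
  · intro x y hxy v hdiff v' hv'
    have hvmem : v ∈ (joinIrredLowerSet y : Set {x : L // JoinIrred x}) \
        (joinIrredLowerSet x : Set {x : L // JoinIrred x}) := by
      rw [hdiff]; rfl
    have hvy : v.val ≤ y := hvmem.1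
    have hvnx : ¬ v.val ≤ x := hvmem.2
    have hv'x : v' ≤ x := by
      refine le_of_supIrred_le fun p hp hpv' => ?_
      have hpJ : JoinIrred p := joinIrred_iff_supIrred.mpr hp
      by_contra hpx
      have hmem2 : (⟨p, hpJ⟩ : {x : L // JoinIrred x}) ∈
          (joinIrredLowerSet y : Set {x : L // JoinIrred x}) \
          (joinIrredLowerSet x : Set {x : L // JoinIrred x}) :=
        ⟨le_trans hpv' (hv'.le.trans hvy), hpx⟩
      rw [hdiff] at hmem2
      have : p = v.val := congrArg Subtype.val hmem2
      exact absurd (this ▸ hpv') (not_le_of_gt hv'.lt)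
    have hcol := color_of_chain c hc v' v.val hv' x hv'x hvnx
    have hxsup : x ⊔ v.val = y := by
      have h1 : x < x ⊔ v.val := left_lt_sup.mpr hvnx
      have h2 : x ⊔ v.val ≤ y := sup_le hxy.le hvy
      rcases h2.eq_or_lt with h | h
      · exact h
      · exact absurd h (hxy.2 h1)
    exact hxsup ▸ hcol.2
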